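/- arXiv:1810.12862 — 3 statements merged into one kernel-verified Lean document; each statement's English description precedes it below -/
import Mathlib

section
/- Let P ⊆ ℝⁿ be a polyhedron with at least one extreme point, and let f : P → ℝ be a continuous function such that every level set of f is the intersection of P with an affine subspace (a flat). If f attains its maximum on P, then f attains its maximum at an extreme point of P. -/
/-- Linearity of the constraint functionals. -/
lemma sum_comb {n : ℕ} (a : Fin n → ℝ) (x y : Fin n → ℝ) (s t : ℝ) :
    ∑ j, a j * (s • x + t • y) j = s * (∑ j, a j * x j) + t * (∑ j, a j * y j) := by
  rw [Finset.mul_sum, Finset.mul_sum, ← Finset.sum_add_distrib]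
  refine Finset.sum_congr rfl fun j _ => ?_
  simp only [Pi.add_apply, Pi.smul_apply, smul_eq_mul]
  ring

/-- The face property: if the maximum of `f` is attained at an interior point of a
segment inside `P`, it is attained at both endpoints. -/
lemma face_of_max {n : ℕ} {P : Set (Fin n → ℝ)} (hconv : Convex ℝ P)
    {f : (Fin n → ℝ) → ℝ} (hf : ContinuousOn f P)
    (hlevel : ∀ c : ℝ, ∃ S : AffineSubspace ℝ (Fin n → ℝ),
      {x ∈ P | f x = c} = P ∩ (S : Set (Fin n → ℝ)))
    {M : ℝ} (hM : ∀ y ∈ P, f y ≤ M)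
    {y z v : Fin n → ℝ} (hy : y ∈ P) (hz : z ∈ P)
    (hv : v ∈ openSegment ℝ y z) (hfv : f v = M) :
    f y = M ∧ f z = M := by
  obtain ⟨α, β, hα, hβ, hαβ, hcomb⟩ := hv
  set γ : ℝ → (Fin n → ℝ) := fun t => (1 - t) • y + t • z with hγ
  have hγmem : ∀ t ∈ Set.Icc (0:ℝ) 1, γ t ∈ P := fun t ht =>
    hconv hy hz (by linarith [ht.2]) ht.1 (by ring)
  have hβ1 : β < 1 := by linarith
  have hvθ : γ β = v := by
    rw [hγ]; simp only
    have h1 : 1 - β = α := by linarith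
    rw [h1]; exact hcomb
  have hcont : ContinuousOn (fun t => f (γ t)) (Set.Icc (0:ℝ) 1) := by
    apply ContinuousOn.comp hf _ (fun t ht => hγmem t ht)
    apply Continuous.continuousOn
    exact ((continuous_const.sub continuous_id).smul continuous_const).add
      (continuous_id.smul continuous_const)
  have key1 : ∀ (c : ℝ) (t₁ t₂ : ℝ), t₁ ≠ t₂ → t₁ ∈ Set.Icc (0:ℝ) 1 →
      t₂ ∈ Set.Icc (0:ℝ) 1 → f (γ t₁) = c → f (γ t₂) = c →
      ∀ u ∈ Set.Icc (0:ℝ) 1, f (γ u) = c := by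
    intro c t₁ t₂ hne h₁ h₂ hf₁ hf₂ u hu
    obtain ⟨S, hS⟩ := hlevel c
    have hiff : ∀ x : Fin n → ℝ, (x ∈ P ∧ f x = c) ↔ (x ∈ P ∧ x ∈ (S : Set (Fin n → ℝ))) := by
      intro x
      have := Set.ext_iff.mp hS x
      simpa [Set.mem_sep_iff, Set.mem_inter_iff] using this
    have m₁ : γ t₁ ∈ (S : Set (Fin n → ℝ)) := ((hiff _).mp ⟨hγmem _ h₁, hf₁⟩).2
    have m₂ : γ t₂ ∈ (S : Set (Fin n → ℝ)) := ((hiff _).mp ⟨hγmem _ h₂, hf₂⟩).2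
    have hne' : t₂ - t₁ ≠ 0 := sub_ne_zero.mpr (Ne.symm hne)
    have mu : γ u ∈ (S : Set (Fin n → ℝ)) := by
      have key : γ u = ((u - t₁)/(t₂ - t₁)) • (γ t₂ -ᵥ γ t₁) +ᵥ γ t₁ := by
        funext j
        simp only [hγ, vsub_eq_sub, vadd_eq_add, Pi.add_apply, Pi.sub_apply, Pi.smul_apply,
          smul_eq_mul]
        field_simp
        ring
      rw [key]
      exact S.smul_vsub_vadd_mem _ m₂ m₁ m₁
    exact ((hiff _).mpr ⟨hγmem u hu, mu⟩).2
  have hle : ∀ t ∈ Set.Icc (0:ℝ) 1, f (γ t) ≤ M := fun t ht => hM _ (hγmem t ht)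
  have hγ0 : γ 0 = y := by funext j; simp [hγ]
  have hγ1 : γ 1 = z := by funext j; simp [hγ]
  have hβmem : β ∈ Set.Icc (0:ℝ) 1 := ⟨le_of_lt hβ, le_of_lt hβ1⟩
  have hfβ : f (γ β) = M := by rw [hvθ]; exact hfv
  have h0 : f (γ 0) = M := by
    by_contra h0
    have h0' : f (γ 0) < M := lt_of_le_of_ne (hle 0 ⟨le_refl _, zero_le_one⟩) h0
    rcases eq_or_lt_of_le (hle 1 ⟨zero_le_one, le_refl _⟩) with h1 | h1
    · exact h0 (key1 M β 1 (ne_of_lt hβ1) hβmem ⟨zero_le_one, le_refl _⟩ hfβ h1 0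
        ⟨le_refl _, zero_le_one⟩)
    · set c := (max (f (γ 0)) (f (γ 1)) + M)/2 with hc
      have hmaxlt : max (f (γ 0)) (f (γ 1)) < M := max_lt h0' h1
      have hc0 : f (γ 0) < c := by
        have := le_max_left (f (γ 0)) (f (γ 1)); rw [hc]; linarith
      have hc1 : f (γ 1) < c := by
        have := le_max_right (f (γ 0)) (f (γ 1)); rw [hc]; linarith
      have hcM : c < M := by rw [hc]; linarith
      have hIVT1 : c ∈ (fun t => f (γ t)) '' Set.Icc 0 β := by
        apply intermediate_value_Icc (le_of_lt hβ)
          (hcont.mono (Set.Icc_subset_Icc (le_refl _) (le_of_lt hβ1)))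
        exact ⟨le_of_lt hc0, by rw [hfβ]; exact le_of_lt hcM⟩
      have hIVT2 : c ∈ (fun t => f (γ t)) '' Set.Icc β 1 := by
        apply intermediate_value_Icc' (le_of_lt hβ1)
          (hcont.mono (Set.Icc_subset_Icc (le_of_lt hβ) (le_refl _)))
        exact ⟨le_of_lt hc1, by rw [hfβ]; exact le_of_lt hcM⟩
      obtain ⟨s₁, hs₁mem, hs₁⟩ := hIVT1
      obtain ⟨s₂, hs₂mem, hs₂⟩ := hIVT2
      have hs₁ne : s₁ ≠ s₂ := by
        intro h
        have hb1 : s₁ = β := le_antisymm hs₁mem.2 (h ▸ hs₂mem.1)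
        have hcβ : f (γ β) = c := hb1 ▸ hs₁
        linarith
      have := key1 c s₁ s₂ hs₁ne ⟨hs₁mem.1, le_trans hs₁mem.2 (le_of_lt hβ1)⟩
        ⟨le_trans (le_of_lt hβ) hs₂mem.1, hs₂mem.2⟩ hs₁ hs₂ β hβmem
      rw [hfβ] at this
      linarith
  have h1 : f (γ 1) = M := by
    by_contra h1
    have h1' : f (γ 1) < M := lt_of_le_of_ne (hle 1 ⟨zero_le_one, le_refl _⟩) h1
    have := key1 M 0 β (ne_of_lt hβ) ⟨le_refl _, zero_le_one⟩ hβmem h0 hfβ 1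
      ⟨zero_le_one, le_refl _⟩
    linarith
  exact ⟨hγ0 ▸ h0, hγ1 ▸ h1⟩

/-- A continuous function on a polyhedron with at least one extreme
point, whose level sets are intersections of the polyhedron with affine subspaces,
attains its maximum (when attained at all) at an extreme point. -/
theorem maximizer_at_extreme_point {n : ℕ} (P : Set (Fin n → ℝ))
    (hpoly : ∃ (m : ℕ) (a : Fin m → Fin n → ℝ) (b : Fin m → ℝ),
      P = {x | ∀ i, ∑ j, a i j * x j ≤ b i})
    (hext : (Set.extremePoints ℝ P).Nonempty)
    (f : (Fin n → ℝ) → ℝ) (hf : ContinuousOn f P)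
    (hlevel : ∀ c : ℝ, ∃ S : AffineSubspace ℝ (Fin n → ℝ),
      {x ∈ P | f x = c} = P ∩ (S : Set (Fin n → ℝ)))
    (hmax : ∃ x ∈ P, ∀ y ∈ P, f y ≤ f x) :
    ∃ x ∈ Set.extremePoints ℝ P, ∀ y ∈ P, f y ≤ f x := by
  classical
  obtain ⟨m, a, b, hP⟩ := hpoly
  obtain ⟨x₀, hx₀P, hx₀max⟩ := hmax
  set M := f x₀ with hMdef
  obtain ⟨S, hS⟩ := hlevel M
  set φ : Fin m → (Fin n → ℝ) → ℝ := fun i x => ∑ j, a i j * x j with hφ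
  have hPmem : ∀ x : Fin n → ℝ, x ∈ P ↔ ∀ i, φ i x ≤ b i := fun x => by
    rw [hP]; exact Iff.rfl
  -- linearity helpers
  have hlin : ∀ (i : Fin m) (x d : Fin n → ℝ) (t : ℝ), φ i (x + t • d) = φ i x + t * φ i d := by
    intro i x d t
    have h := sum_comb (a i) x d 1 t
    simpa [hφ] using h
  have hlinsub : ∀ (i : Fin m) (x y : Fin n → ℝ), φ i (x - y) = φ i x - φ i y := by
    intro i x y
    have h := sum_comb (a i) x y 1 (-1)
    have hxy : x - y = (1:ℝ) • x + (-1:ℝ) • y := by funext j; simp [sub_eq_add_neg]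
    rw [hφ]
    simp only
    rw [hxy, h]
    ring
  have hconv : Convex ℝ P := by
    intro x hx y hy s t hs ht hst
    rw [hPmem] at hx hy ⊢
    intro i
    have hc : φ i (s • x + t • y) = s * φ i x + t * φ i y := sum_comb (a i) x y s t
    rw [hc]
    calc s * φ i x + t * φ i y ≤ s * b i + t * b i :=
          add_le_add (mul_le_mul_of_nonneg_left (hx i) hs)
            (mul_le_mul_of_nonneg_left (hy i) ht)
      _ = b i := by rw [← add_mul, hst, one_mul]
  have hQ : ∀ x : Fin n → ℝ, (x ∈ P ∧ f x = M) ↔ (x ∈ P ∧ x ∈ (S : Set (Fin n → ℝ))) := by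
    intro x
    have := Set.ext_iff.mp hS x
    simpa [Set.mem_sep_iff, Set.mem_inter_iff] using this
  have hx₀Q : x₀ ∈ (S : Set (Fin n → ℝ)) := ((hQ x₀).mp ⟨hx₀P, rfl⟩).2
  set T : (Fin n → ℝ) → Finset (Fin m) := fun x => Finset.univ.filter (fun i => φ i x = b i)
    with hT
  set A : Set ℕ := {k | ∃ x, (x ∈ P ∧ x ∈ (S : Set (Fin n → ℝ))) ∧ k = (T x).card} with hA
  have hAne : A.Nonempty := ⟨(T x₀).card, x₀, ⟨hx₀P, hx₀Q⟩, rfl⟩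
  have hAbdd : BddAbove A := by
    refine ⟨m, fun k hk => ?_⟩
    obtain ⟨x, _, rfl⟩ := hk
    exact le_trans (Finset.card_filter_le _ _) (by simp)
  obtain ⟨v, hvQ, hvcard⟩ := Nat.sSup_mem hAne hAbdd
  have hmaxcard : ∀ x, (x ∈ P ∧ x ∈ (S : Set (Fin n → ℝ))) → (T x).card ≤ (T v).card :=
    fun x hx => hvcard ▸ le_csSup hAbdd ⟨x, hx, rfl⟩
  have hfv : f v = M := ((hQ v).mpr hvQ).2
  have hvineq : ∀ i, φ i v ≤ b i := (hPmem v).mp hvQ.1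
  -- gain lemma: we can't move within Q in a direction with a strictly positive constraint
  have gain : ∀ d : Fin n → ℝ, d ∈ S.direction → (∀ i, φ i v = b i → φ i d = 0) →
      (∃ i, 0 < φ i d) → False := by
    intro d hdS htight hex
    obtain ⟨i₀, hi₀⟩ := hex
    set I : Finset (Fin m) := Finset.univ.filter (fun i => 0 < φ i d) with hI
    have hIne : I.Nonempty := ⟨i₀, by simp [hI, hi₀]⟩
    set r : Fin m → ℝ := fun i => (b i - φ i v) / (φ i d) with hr
    set t := I.inf' hIne r with ht
    have htpos : 0 < t := by
      rw [ht]
      rw [Finset.lt_inf'_iff]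
      intro i hi
      have hid : 0 < φ i d := by simpa [hI] using hi
      have hlt : φ i v < b i := by
        rcases lt_or_eq_of_le (hvineq i) with h | h
        · exact h
        · exact absurd (htight i h) (ne_of_gt hid)
      exact div_pos (by linarith) hid
    set w := v + t • d with hw
    have hwP : w ∈ P := by
      rw [hPmem]
      intro i
      rw [hw, hlin]
      rcases le_or_gt (φ i d) 0 with hle | hlt
      · nlinarith [hvineq i]
      · have hiI : i ∈ I := by simp [hI, hlt]
        have h1 : t ≤ r i := Finset.inf'_le r hiI
        have h2 : t * φ i d ≤ b i - φ i v := by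
          rw [hr] at h1
          calc t * φ i d ≤ ((b i - φ i v) / φ i d) * φ i d :=
                mul_le_mul_of_nonneg_right h1 (le_of_lt hlt)
            _ = b i - φ i v := div_mul_cancel₀ _ (ne_of_gt hlt)
        linarith
    have hwS : w ∈ (S : Set (Fin n → ℝ)) := by
      have h := AffineSubspace.vadd_mem_of_mem_direction (S.direction.smul_mem t hdS) hvQ.2
      simpa [hw, vadd_eq_add, add_comm] using h
    obtain ⟨i₁, hi₁I, hi₁eq⟩ := Finset.exists_mem_eq_inf' hIne r
    have hi₁d : 0 < φ i₁ d := by simpa [hI] using hi₁I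
    have hi₁new : φ i₁ w = b i₁ := by
      rw [hw, hlin, ht, hi₁eq, hr]
      field_simp
      ring
    have hsub : T v ⊆ T w := by
      intro i hi
      simp only [hT, Finset.mem_filter, Finset.mem_univ, true_and] at hi ⊢
      rw [hw, hlin, htight i hi, mul_zero, add_zero]
      exact hi
    have hni : i₁ ∉ T v := by
      simp only [hT, Finset.mem_filter, Finset.mem_univ, true_and]
      intro h
      exact absurd (htight i₁ h) (ne_of_gt hi₁d)
    have hmem : i₁ ∈ T w := by
      simp only [hT, Finset.mem_filter, Finset.mem_univ, true_and]
      exact hi₁new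
    have hcardlt : (T v).card < (T w).card :=
      Finset.card_lt_card ⟨hsub, fun hss => hni (hss hmem)⟩
    exact absurd (hmaxcard w ⟨hwP, hwS⟩) (not_le.mpr hcardlt)
  -- v is an extreme point of P
  have hvext : v ∈ Set.extremePoints ℝ P := by
    rw [mem_extremePoints]
    refine ⟨hvQ.1, fun x₁ hx₁ x₂ hx₂ hseg => ?_⟩
    have hface := face_of_max hconv hf hlevel hx₀max hx₁ hx₂ hseg hfv
    have hx₁S : x₁ ∈ (S : Set (Fin n → ℝ)) := ((hQ x₁).mp ⟨hx₁, hface.1⟩).2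
    have hx₂S : x₂ ∈ (S : Set (Fin n → ℝ)) := ((hQ x₂).mp ⟨hx₂, hface.2⟩).2
    by_cases hne : x₁ = x₂
    · subst hne
      rw [openSegment_same] at hseg
      have : v = x₁ := hseg.symm ▸ rfl
      exact ⟨this.symm, this.symm⟩
    · exfalso
      set d := x₂ - x₁ with hd
      have hd0 : d ≠ 0 := sub_ne_zero.mpr (fun h => hne h.symm)
      have hdS : d ∈ S.direction := by
        have := AffineSubspace.vsub_mem_direction hx₂S hx₁S
        simpa [vsub_eq_sub] using this
      obtain ⟨α, β, hα, hβ, hαβ, hcomb⟩ := hseg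
      have htight : ∀ i, φ i v = b i → φ i d = 0 := by
        intro i hiv
        have hlin2 : φ i v = α * φ i x₁ + β * φ i x₂ := by
          rw [← hcomb]
          exact sum_comb (a i) x₁ x₂ α β
        have h1 : φ i x₁ ≤ b i := (hPmem x₁).mp hx₁ i
        have h2 : φ i x₂ ≤ b i := (hPmem x₂).mp hx₂ i
        have hb : α * b i + β * b i = b i := by rw [← add_mul, hαβ, one_mul]
        have e1 : φ i x₁ = b i := by
          by_contra hne1
          have hlt1 : φ i x₁ < b i := lt_of_le_of_ne h1 hne1
          have hp1 := mul_lt_mul_of_pos_left hlt1 hα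
          have hp2 := mul_le_mul_of_nonneg_left h2 hβ.le
          linarith
        have e2 : φ i x₂ = b i := by
          by_contra hne2
          have hlt2 : φ i x₂ < b i := lt_of_le_of_ne h2 hne2
          have hp1 := mul_le_mul_of_nonneg_left h1 hα.le
          have hp2 := mul_lt_mul_of_pos_left hlt2 hβ
          linarith
        rw [hd, hlinsub, e1, e2, sub_self]
      rcases Classical.em (∃ i, 0 < φ i d) with hpos | hnpos
      · exact gain d hdS htight hpos
      · rcases Classical.em (∃ i, φ i d < 0) with hneg | hnneg
        · obtain ⟨i, hi⟩ := hneg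
          have hnd : ∀ i, φ i (-d) = - φ i d := by
            intro i
            have h := hlinsub i 0 d
            have h0 : φ i 0 = 0 := by simp [hφ]
            simpa [h0] using h
          apply gain (-d) (S.direction.neg_mem hdS)
          · intro i h
            rw [hnd, htight i h, neg_zero]
          · exact ⟨i, by rw [hnd]; linarith⟩
        · have hz : ∀ i, φ i d = 0 := by
            push_neg at hnpos hnneg
            exact fun i => le_antisymm (hnpos i) (hnneg i)
          obtain ⟨e, he⟩ := hext
          rw [mem_extremePoints] at he
          have heP : ∀ i, φ i e ≤ b i := (hPmem e).mp he.1
          have hed1 : e - d ∈ P := by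
            rw [hPmem]
            intro i
            rw [hlinsub, hz, sub_zero]
            exact heP i
          have hed2 : e + d ∈ P := by
            rw [hPmem]
            intro i
            have : e + d = e + (1:ℝ) • d := by simp
            rw [this, hlin, hz, mul_zero, add_zero]
            exact heP i
          have heseg : e ∈ openSegment ℝ (e - d) (e + d) :=
            ⟨1/2, 1/2, by norm_num, by norm_num, by norm_num, by funext j; simp; ring⟩
          have hres := he.2 _ hed1 _ hed2 heseg
          have : e + d = e := hres.2
          exact hd0 (by simpa using congrArg (fun x => x - e) this)
  exact ⟨v, hvext, fun y hy => hfv ▸ hx₀max y hy⟩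
end

section
/- Let ε ∈ ℂ^d, E ∈ ℂ^{d×m}, and ζ = r + is ∈ ℂ with r, s ≠ 0, and suppose ζ² is not an eigenvalue of EᴴE. Then |ζ² − εᴴε − εᴴE(ζ²I − EᴴE)⁻¹Eᴴε| ≥ |Im(ζ²)|·(1 + ‖(ζ²I − EᴴE)⁻¹Eᴴε‖²) = 2|rs|·(1 + ‖(ζ²I − EᴴE)⁻¹Eᴴε‖²). -/
open Matrix

lemma dp_star_self {m : ℕ} (v : Fin m → ℂ) : star v ⬝ᵥ v = (↑(∑ i, ‖v i‖^2) : ℂ) := by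
  simp [dotProduct, Complex.mul_conj', mul_comm]

lemma herm_quad_real {d m : ℕ} (E : Matrix (Fin d) (Fin m) ℂ) (v : Fin m → ℂ) :
    (star ((Eᴴ * E) *ᵥ v) ⬝ᵥ v).im = 0 := by
  have h : star ((Eᴴ * E) *ᵥ v) ⬝ᵥ v = star (E *ᵥ v) ⬝ᵥ (E *ᵥ v) := by
    rw [← mulVec_mulVec, star_mulVec, conjTranspose_conjTranspose, ← dotProduct_mulVec]
  rw [h, dp_star_self]
  simp [← Complex.ofReal_pow]

/-- Lower bound on the denominator
|ζ² − εᴴε − εᴴE(ζ²I − EᴴE)⁻¹Eᴴε| ≥ |Im(ζ²)|(1 + ‖(ζ²I − EᴴE)⁻¹Eᴴε‖²),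
with |Im(ζ²)| = 2|rs|. -/
theorem denominator_lower_bound {d m : ℕ} (ε : Fin d → ℂ)
    (E : Matrix (Fin d) (Fin m) ℂ) (ζ : ℂ) (hr : ζ.re ≠ 0) (hs : ζ.im ≠ 0)
    (hspec : ζ ^ 2 ∉ spectrum ℂ (Eᴴ * E)) :
    |(ζ ^ 2).im| *
        (1 + ∑ i, ‖(((ζ ^ 2 • (1 : Matrix (Fin m) (Fin m) ℂ) - Eᴴ * E)⁻¹ * Eᴴ) *ᵥ ε) i‖ ^ 2)
      ≤ ‖ζ ^ 2 - star ε ⬝ᵥ ε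
          - star ε ⬝ᵥ ((E * (ζ ^ 2 • (1 : Matrix (Fin m) (Fin m) ℂ) - Eᴴ * E)⁻¹ * Eᴴ) *ᵥ ε)‖ ∧
    |(ζ ^ 2).im| = 2 * |ζ.re * ζ.im| := by
  set z := ζ ^ 2 with hz
  set A := Eᴴ * E with hA
  set B := z • (1 : Matrix (Fin m) (Fin m) ℂ) - A with hB
  -- invertibility
  have hBunit : IsUnit B := by
    rw [spectrum.notMem_iff] at hspec
    have : (algebraMap ℂ (Matrix (Fin m) (Fin m) ℂ)) z = z • 1 := Algebra.algebraMap_eq_smul_one z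
    rwa [this] at hspec
  have hdet : IsUnit B.det := (Matrix.isUnit_iff_isUnit_det B).mp hBunit
  set v := (B⁻¹ * Eᴴ) *ᵥ ε with hv
  have hvv : v = B⁻¹ *ᵥ (Eᴴ *ᵥ ε) := by rw [hv, ← mulVec_mulVec]
  have hBv : B *ᵥ v = Eᴴ *ᵥ ε := by
    rw [hvv, mulVec_mulVec, Matrix.mul_nonsing_inv B hdet, one_mulVec]
  set S := ∑ i, ‖v i‖ ^ 2 with hS
  -- rewrite the cross term
  have hT : star ε ⬝ᵥ ((E * B⁻¹ * Eᴴ) *ᵥ ε) = star (B *ᵥ v) ⬝ᵥ v := by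
    rw [hBv, star_mulVec, conjTranspose_conjTranspose, Matrix.mul_assoc,
      ← mulVec_mulVec, ← hv, dotProduct_mulVec]
  -- imaginary part of cross term
  have hIm : (star (B *ᵥ v) ⬝ᵥ v).im = -(z.im * S) := by
    have : B *ᵥ v = z • v - A *ᵥ v := by
      rw [hB, sub_mulVec, smul_mulVec, one_mulVec]
    rw [this, star_sub, sub_dotProduct, star_smul, smul_dotProduct, dp_star_self, ← hS]
    simp [hA, herm_quad_real, Complex.mul_im]
  have hεε : (star ε ⬝ᵥ ε).im = 0 := by rw [dp_star_self]; simp [← Complex.ofReal_pow]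
  constructor
  · have him : (z - star ε ⬝ᵥ ε - star ε ⬝ᵥ ((E * B⁻¹ * Eᴴ) *ᵥ ε)).im = z.im * (1 + S) := by
      rw [hT]
      simp [hIm, hεε]
      ring
    calc |z.im| * (1 + S) = |(z - star ε ⬝ᵥ ε - star ε ⬝ᵥ ((E * B⁻¹ * Eᴴ) *ᵥ ε)).im| := by
          rw [him, abs_mul]
          have h1S : (0:ℝ) ≤ 1 + S := by positivity
          rw [abs_of_nonneg h1S]
      _ ≤ ‖z - star ε ⬝ᵥ ε - star ε ⬝ᵥ ((E * B⁻¹ * Eᴴ) *ᵥ ε)‖ :=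
          Complex.abs_im_le_norm _
  · rw [hz, sq, Complex.mul_im]
    have h2 : ζ.re * ζ.im + ζ.im * ζ.re = 2 * (ζ.re * ζ.im) := by ring
    rw [h2, abs_mul, abs_two]
end

section
/- Let ε ∈ ℂ^d, E ∈ ℂ^{d×m}, ζ = r + is ∈ ℂ with r,s ≠ 0, assume ζ²I − EᴴE is invertible, and let Ω be any matrix with ‖ΩᴴΩ‖ ≤ 1 (operator norm). Then the quantity γ̃ := (δ + εᴴE(ζ²I−EᴴE)⁻¹ΩᴴΩ(ζ²I−EᴴE)⁻¹Eᴴε)/(ζ² − εᴴε − εᴴE(ζ²I−EᴴE)⁻¹Eᴴε), where δ ∈ {0,1}, satisfies |γ̃| ≤ 1/(2|rs|). -/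
open Matrix

namespace MDBaux

noncomputable def e {n : ℕ} (a : Fin n → ℂ) : EuclideanSpace ℂ (Fin n) :=
  (WithLp.equiv 2 _).symm a

lemma inner_e {n : ℕ} (a b : Fin n → ℂ) :
    (inner ℂ (e a) (e b) : ℂ) = star a ⬝ᵥ b := by
  simp [e, PiLp.inner_apply, dotProduct, mul_comm]

lemma self_dot {n : ℕ} (a : Fin n → ℂ) :
    star a ⬝ᵥ a = ((‖e a‖ ^ 2 : ℝ) : ℂ) := by
  rw [← inner_e, inner_self_eq_norm_sq_to_K]
  norm_cast

lemma cs {n : ℕ} (a b : Fin n → ℂ) :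
    ‖star a ⬝ᵥ b‖ ≤ ‖e a‖ * ‖e b‖ := by
  rw [← inner_e]
  exact norm_inner_le_norm _ _

lemma gram {n n' : ℕ} (M : Matrix (Fin n') (Fin n) ℂ) (y : Fin n → ℂ) :
    star (M *ᵥ y) ⬝ᵥ (M *ᵥ y) = star y ⬝ᵥ ((Mᴴ * M) *ᵥ y) := by
  simp only [star_mulVec, dotProduct_mulVec, vecMul_vecMul]

lemma eCLM {n : ℕ} (M : Matrix (Fin n) (Fin n) ℂ) (a : Fin n → ℂ) :
    Matrix.toEuclideanCLM (𝕜 := ℂ) M (e a) = e (M *ᵥ a) := by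
  unfold e
  exact toEuclideanCLM_toLp M a

end MDBaux

open MDBaux in
/-- The martingale-difference quotient
γ̃ = (δ + εᴴE R ΩᴴΩ R Eᴴε)/(ζ² − εᴴε − εᴴE R Eᴴε), R = (ζ²I−EᴴE)⁻¹,
satisfies |γ̃| ≤ 1/(2|rs|) whenever ‖ΩᴴΩ‖ ≤ 1 and δ ∈ {0,1}. -/
theorem martingale_difference_bound {d m k : ℕ} (ε : Fin d → ℂ)
    (E : Matrix (Fin d) (Fin m) ℂ) (Ω : Matrix (Fin k) (Fin m) ℂ)
    (ζ : ℂ) (hr : ζ.re ≠ 0) (hs : ζ.im ≠ 0)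
    (hinv : IsUnit (ζ ^ 2 • (1 : Matrix (Fin m) (Fin m) ℂ) - Eᴴ * E).det)
    (hΩ : ‖Matrix.toEuclideanCLM (𝕜 := ℂ) (Ωᴴ * Ω)‖ ≤ 1)
    (δ : ℂ) (hδ : δ = 0 ∨ δ = 1) :
    ‖((δ + star ε ⬝ᵥ ((E * (ζ ^ 2 • (1 : Matrix (Fin m) (Fin m) ℂ) - Eᴴ * E)⁻¹ *
              (Ωᴴ * Ω) * (ζ ^ 2 • (1 : Matrix (Fin m) (Fin m) ℂ) - Eᴴ * E)⁻¹ * Eᴴ) *ᵥ ε)) /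
          (ζ ^ 2 - star ε ⬝ᵥ ε -
            star ε ⬝ᵥ ((E * (ζ ^ 2 • (1 : Matrix (Fin m) (Fin m) ℂ) - Eᴴ * E)⁻¹ * Eᴴ) *ᵥ ε)))‖
      ≤ 1 / (2 * |ζ.re * ζ.im|) := by
  set A : Matrix (Fin m) (Fin m) ℂ := ζ ^ 2 • 1 - Eᴴ * E with hA
  have hAR : A * A⁻¹ = 1 := mul_nonsing_inv A hinv
  have hRA : A⁻¹ * A = 1 := nonsing_inv_mul A hinv
  set x : Fin m → ℂ := Eᴴ *ᵥ ε with hx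
  set v : Fin m → ℂ := A⁻¹ *ᵥ x with hv
  set w : Fin m → ℂ := (A⁻¹)ᴴ *ᵥ x with hw
  have hxAv : A *ᵥ v = x := by rw [hv, mulVec_mulVec, hAR, one_mulVec]
  -- conjTranspose of A
  have hAH : Aᴴ = (starRingEnd ℂ (ζ ^ 2)) • 1 - Eᴴ * E := by
    simp [hA, conjTranspose_smul, conjTranspose_mul]
  -- A commutes with Aᴴ
  have hcomm : A * Aᴴ = Aᴴ * A := by
    rw [hAH, hA]
    simp only [sub_mul, mul_sub, smul_mul_assoc, mul_smul_comm, one_mul, mul_one,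
      smul_sub, smul_smul, mul_comm]
    abel
  have hinvH : IsUnit (Aᴴ).det := by
    rw [det_conjTranspose]; exact hinv.star
  have hARH : Aᴴ * (Aᴴ)⁻¹ = 1 := mul_nonsing_inv _ hinvH
  have hRAH : (Aᴴ)⁻¹ * Aᴴ = 1 := nonsing_inv_mul _ hinvH
  have hcomminv : (Aᴴ)⁻¹ * A = A * (Aᴴ)⁻¹ := by
    calc (Aᴴ)⁻¹ * A = (Aᴴ)⁻¹ * A * (Aᴴ * (Aᴴ)⁻¹) := by rw [hARH, mul_one]
    _ = (Aᴴ)⁻¹ * (A * Aᴴ) * (Aᴴ)⁻¹ := by simp only [mul_assoc]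
    _ = (Aᴴ)⁻¹ * (Aᴴ * A) * (Aᴴ)⁻¹ := by rw [hcomm]
    _ = A * (Aᴴ)⁻¹ := by rw [← mul_assoc, hRAH, one_mul]
  set z : Fin m → ℂ := (Aᴴ)⁻¹ *ᵥ v with hz
  have hwz : w = A *ᵥ z := by
    have h0 : w = (Aᴴ⁻¹ * A) *ᵥ v := by
      rw [hw, conjTranspose_nonsing_inv, ← hxAv, mulVec_mulVec]
    rw [h0, hcomminv, ← mulVec_mulVec, ← hz]
  have hvz : Aᴴ *ᵥ z = v := by rw [hz, mulVec_mulVec, hARH, one_mulVec]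
  -- norm of w equals norm of v
  have hnorm_wv : ‖e w‖ = ‖e v‖ := by
    have h1 : star w ⬝ᵥ w = star v ⬝ᵥ v := by
      rw [hwz, ← hvz, MDBaux.gram, MDBaux.gram, conjTranspose_conjTranspose, hcomm]
    rw [self_dot, self_dot] at h1
    have h2 : ‖e w‖ ^ 2 = ‖e v‖ ^ 2 := by exact_mod_cast h1
    nlinarith [norm_nonneg (e w), norm_nonneg (e v)]
  -- contraction property of Ω
  have hcontr : ∀ y : Fin m → ℂ, ‖e (Ω *ᵥ y)‖ ≤ ‖e y‖ := by
    intro y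
    have h1 : star (Ω *ᵥ y) ⬝ᵥ (Ω *ᵥ y) = star y ⬝ᵥ ((Ωᴴ * Ω) *ᵥ y) := MDBaux.gram Ω y
    have h2 : (‖e (Ω *ᵥ y)‖ ^ 2 : ℝ) = (inner ℂ (e y) (toEuclideanCLM (𝕜 := ℂ) (Ωᴴ * Ω) (e y)) : ℂ).re := by
      rw [eCLM, inner_e, ← h1, self_dot, Complex.ofReal_re]
    have h3 : (inner ℂ (e y) (toEuclideanCLM (𝕜 := ℂ) (Ωᴴ * Ω) (e y)) : ℂ).re ≤ ‖e y‖ ^ 2 := by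
      have h4 := norm_inner_le_norm (𝕜 := ℂ) (e y) (toEuclideanCLM (𝕜 := ℂ) (Ωᴴ * Ω) (e y))
      have h5 : ‖toEuclideanCLM (𝕜 := ℂ) (Ωᴴ * Ω) (e y)‖ ≤ ‖e y‖ := by
        calc ‖toEuclideanCLM (𝕜 := ℂ) (Ωᴴ * Ω) (e y)‖
            ≤ ‖toEuclideanCLM (𝕜 := ℂ) (Ωᴴ * Ω)‖ * ‖e y‖ := ContinuousLinearMap.le_opNorm _ _
          _ ≤ 1 * ‖e y‖ := by
              exact mul_le_mul_of_nonneg_right hΩ (norm_nonneg _)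
          _ = ‖e y‖ := one_mul _
      have h6 := Complex.re_le_norm (inner ℂ (e y) (toEuclideanCLM (𝕜 := ℂ) (Ωᴴ * Ω) (e y)) : ℂ)
      calc (inner ℂ (e y) (toEuclideanCLM (𝕜 := ℂ) (Ωᴴ * Ω) (e y)) : ℂ).re
          ≤ ‖(inner ℂ (e y) (toEuclideanCLM (𝕜 := ℂ) (Ωᴴ * Ω) (e y)) : ℂ)‖ := h6
        _ ≤ ‖e y‖ * ‖toEuclideanCLM (𝕜 := ℂ) (Ωᴴ * Ω) (e y)‖ := h4
        _ ≤ ‖e y‖ * ‖e y‖ := mul_le_mul_of_nonneg_left h5 (norm_nonneg _)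
        _ = ‖e y‖ ^ 2 := (sq (‖e y‖)).symm
    have h7 : ‖e (Ω *ᵥ y)‖ ^ 2 ≤ ‖e y‖ ^ 2 := by rw [h2]; exact h3
    nlinarith [norm_nonneg (e (Ω *ᵥ y)), norm_nonneg (e y)]
  -- rewrite the numerator dot product
  have hnum : star ε ⬝ᵥ ((E * A⁻¹ * (Ωᴴ * Ω) * A⁻¹ * Eᴴ) *ᵥ ε)
      = star (Ω *ᵥ w) ⬝ᵥ (Ω *ᵥ v) := by
    rw [hw, hv, hx, ← Matrix.mul_assoc (E * A⁻¹) Ωᴴ Ω]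
    simp only [star_mulVec, conjTranspose_conjTranspose, dotProduct_mulVec, vecMul_vecMul]
  -- rewrite the denominator dot product
  have hden : star ε ⬝ᵥ ((E * A⁻¹ * Eᴴ) *ᵥ ε) = star x ⬝ᵥ v := by
    rw [hv, hx]
    simp only [star_mulVec, conjTranspose_conjTranspose, dotProduct_mulVec, vecMul_vecMul]
  rw [hnum, hden]
  -- denominator imaginary part
  have hxv : star x ⬝ᵥ v = (starRingEnd ℂ (ζ ^ 2)) * ((‖e v‖ ^ 2 : ℝ) : ℂ)
      - ((‖e (E *ᵥ v)‖ ^ 2 : ℝ) : ℂ) := by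
    have h1 : star x ⬝ᵥ v = star v ⬝ᵥ (Aᴴ *ᵥ v) := by
      rw [← hxAv, star_mulVec, ← dotProduct_mulVec]
    rw [h1, hAH, sub_mulVec, smul_mulVec, one_mulVec, dotProduct_sub,
      dotProduct_smul, smul_eq_mul, self_dot]
    congr 1
    rw [← MDBaux.gram, self_dot]
  set nv : ℝ := ‖e v‖ with hnv
  set den : ℂ := ζ ^ 2 - star ε ⬝ᵥ ε - star x ⬝ᵥ v with hden2
  have him : den.im = (2 * ζ.re * ζ.im) * (1 + nv ^ 2) := by
    rw [hden2, hxv, self_dot]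
    simp [Complex.sub_im, Complex.mul_im, Complex.conj_re, Complex.conj_im, pow_two,
      Complex.mul_im, Complex.mul_re]
    ring
  have hpos : (0 : ℝ) < 1 + nv ^ 2 := by positivity
  have hrs : (0 : ℝ) < 2 * |ζ.re * ζ.im| := by
    have : ζ.re * ζ.im ≠ 0 := mul_ne_zero hr hs
    have := abs_pos.mpr this
    linarith
  have hden_lb : 2 * |ζ.re * ζ.im| * (1 + nv ^ 2) ≤ ‖den‖ := by
    have h1 : |den.im| = 2 * |ζ.re * ζ.im| * (1 + nv ^ 2) := by
      rw [him, abs_mul, abs_of_pos hpos]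
      congr 1
      rw [abs_mul, abs_mul, abs_mul]
      simp [abs_of_nonneg]
      ring
    rw [← h1]
    exact Complex.abs_im_le_norm den
  have hnum_ub : ‖δ + star (Ω *ᵥ w) ⬝ᵥ (Ω *ᵥ v)‖ ≤ 1 + nv ^ 2 := by
    calc ‖δ + star (Ω *ᵥ w) ⬝ᵥ (Ω *ᵥ v)‖
        ≤ ‖δ‖ + ‖star (Ω *ᵥ w) ⬝ᵥ (Ω *ᵥ v)‖ := norm_add_le _ _
      _ ≤ 1 + nv ^ 2 := by
          have hd1 : ‖δ‖ ≤ 1 := by rcases hδ with h | h <;> simp [h]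
          have hd2 : ‖star (Ω *ᵥ w) ⬝ᵥ (Ω *ᵥ v)‖ ≤ nv ^ 2 := by
            calc ‖star (Ω *ᵥ w) ⬝ᵥ (Ω *ᵥ v)‖
                ≤ ‖e (Ω *ᵥ w)‖ * ‖e (Ω *ᵥ v)‖ := cs _ _
              _ ≤ ‖e w‖ * ‖e v‖ :=
                  mul_le_mul (hcontr w) (hcontr v) (norm_nonneg _) (norm_nonneg _)
              _ = nv ^ 2 := by rw [hnorm_wv, hnv, sq]
          linarith
  rw [norm_div]
  calc ‖δ + star (Ω *ᵥ w) ⬝ᵥ (Ω *ᵥ v)‖ / ‖den‖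
      ≤ (1 + nv ^ 2) / (2 * |ζ.re * ζ.im| * (1 + nv ^ 2)) := by
        apply div_le_div₀ (le_of_lt hpos) hnum_ub (by positivity) hden_lb
    _ = 1 / (2 * |ζ.re * ζ.im|) := by
        rw [mul_comm (2 * |ζ.re * ζ.im|), ← div_div, div_self (ne_of_gt hpos)]
end
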